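/- Let q ≥ 1 and s ≥ 1 be integers, m = 2s, and let T : (Fin m → Fin q) → ℂ be a perfect (balanced-unitary) tensor. Let B ⊆ Fin m with |B| = c, let A = Bᶜ, and define the normalized reduced density matrix ρ over A by ρ(a, a') = q^{−s} ∑_{b : B → Fin q} T(a ⊔ b) · conj(T(a' ⊔ b)). Then: (i) ρ is Hermitian and positive semidefinite with trace 1; (ii) if m − c ≤ s (at least half the indices are traced out), ρ = q^{−(m−c)} · 1, the maximally mixed matrix; (iii) if c < s (fewer than half the indices are traced out), ρ · ρ = q^{−c} · ρ and rank ρ = q^c, so ρ has exactly q^c nonzero eigenvalues, each equal to q^{−c}. -/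

import Mathlib

set_option maxHeartbeats 1000000


open scoped ComplexOrder

/-- Combine an assignment on a finite index subset `I` with an assignment on its
complement into a full assignment. -/
def glue {ι α : Type*} [Fintype ι] [DecidableEq ι] (I : Finset ι)
    (a : {i // i ∈ I} → α) (b : {i // i ∈ Iᶜ} → α) : ι → α :=
  fun x => if h : x ∈ I then a ⟨x, h⟩ else b ⟨x, Finset.mem_compl.mpr h⟩

section Aux

variable {m q : ℕ}

/-- Restriction of a full assignment to a subset. -/
def restr (I : Finset (Fin m)) (x : Fin m → Fin q) : {i // i ∈ I} → Fin q :=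
  fun i => x i

lemma glue_restr (I : Finset (Fin m)) (x : Fin m → Fin q) :
    glue I (restr I x) (restr Iᶜ x) = x := by
  funext i
  unfold glue restr
  split <;> rfl

lemma restr_glue_left (I : Finset (Fin m)) (a : {i // i ∈ I} → Fin q)
    (b : {i // i ∈ Iᶜ} → Fin q) : restr I (glue I a b) = a := by
  funext i
  show glue I a b ↑i = a i
  unfold glue
  rw [dif_pos i.2, Subtype.coe_eta]

lemma restr_glue_right (I : Finset (Fin m)) (a : {i // i ∈ I} → Fin q)
    (b : {i // i ∈ Iᶜ} → Fin q) : restr Iᶜ (glue I a b) = b := by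
  funext i
  show glue I a b ↑i = b i
  unfold glue
  rw [dif_neg (Finset.mem_compl.mp i.2), Subtype.coe_eta]

/-- A full assignment is equivalent to a pair of assignments on `I` and `Iᶜ`. -/
def fullEquiv (I : Finset (Fin m)) :
    (Fin m → Fin q) ≃ (({i // i ∈ I} → Fin q) × ({i // i ∈ Iᶜ} → Fin q)) where
  toFun x := (restr I x, restr Iᶜ x)
  invFun p := glue I p.1 p.2
  left_inv x := glue_restr I x
  right_inv p := Prod.ext (restr_glue_left I p.1 p.2) (restr_glue_right I p.1 p.2)

lemma sum_glue (I : Finset (Fin m)) (F : (Fin m → Fin q) → ℂ) :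
    ∑ a : {i // i ∈ I} → Fin q, ∑ b : {i // i ∈ Iᶜ} → Fin q, F (glue I a b)
      = ∑ x : Fin m → Fin q, F x := by
  calc ∑ a : {i // i ∈ I} → Fin q, ∑ b : {i // i ∈ Iᶜ} → Fin q, F (glue I a b)
      = ∑ p : ({i // i ∈ I} → Fin q) × ({i // i ∈ Iᶜ} → Fin q), F (glue I p.1 p.2) :=
        (Fintype.sum_prod_type (f := fun p => F (glue I p.1 p.2))).symm
    _ = ∑ x : Fin m → Fin q, F x := Equiv.sum_comp (fullEquiv I).symm F

/-- Split up an assignment on `D` into its parts on `I ∩ D` and on `Iᶜ ⊆ D`. -/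
def splitEquiv (I D : Finset (Fin m)) (h : Iᶜ ⊆ D) :
    ({i // i ∈ D} → Fin q) ≃ (({i // i ∈ I ∩ D} → Fin q) × ({i // i ∈ Iᶜ} → Fin q)) where
  toFun d := (fun i => d ⟨i, (Finset.mem_inter.mp i.2).2⟩, fun i => d ⟨i, h i.2⟩)
  invFun p := fun i => if hh : ↑i ∈ I then p.1 ⟨i, Finset.mem_inter.mpr ⟨hh, i.2⟩⟩
                else p.2 ⟨i, Finset.mem_compl.mpr hh⟩
  left_inv d := by
    funext i
    dsimp only
    split <;> rw [Subtype.coe_eta]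
  right_inv p := by
    obtain ⟨g, f⟩ := p
    refine Prod.ext (funext fun i => ?_) (funext fun i => ?_)
    · have hi : ↑i ∈ I := (Finset.mem_inter.mp i.2).1
      dsimp only
      rw [dif_pos hi, Subtype.coe_eta]
    · have hi : ↑i ∉ I := Finset.mem_compl.mp i.2
      dsimp only
      rw [dif_neg hi, Subtype.coe_eta]

lemma glue_eq_split (I D : Finset (Fin m)) (h : Iᶜ ⊆ D)
    (d : {i // i ∈ D} → Fin q) (e : {i // i ∈ Dᶜ} → Fin q) :
    glue D d e = glue I (restr I (glue D d e)) (fun i : {i // i ∈ Iᶜ} => d ⟨i.1, h i.2⟩) := by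
  have h2 : restr Iᶜ (glue D d e) = (fun i : {i // i ∈ Iᶜ} => d ⟨i.1, h i.2⟩) := by
    funext i
    show glue D d e i.1 = d ⟨i.1, h i.2⟩
    unfold glue
    rw [dif_pos (h i.2)]
  rw [← h2, glue_restr]

lemma glue_eq_split' (I D : Finset (Fin m)) (h : Iᶜ ⊆ Dᶜ)
    (d : {i // i ∈ D} → Fin q) (e : {i // i ∈ Dᶜ} → Fin q) :
    glue D d e = glue I (restr I (glue D d e)) (fun i : {i // i ∈ Iᶜ} => e ⟨i.1, h i.2⟩) := by
  have h2 : restr Iᶜ (glue D d e) = (fun i : {i // i ∈ Iᶜ} => e ⟨i.1, h i.2⟩) := by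
    funext i
    show glue D d e i.1 = e ⟨i.1, h i.2⟩
    unfold glue
    rw [dif_neg (Finset.mem_compl.mp (h i.2))]
  rw [← h2, glue_restr]

/-- Merging: values on `I ∩ B` from `g`, values outside `B` from `a`. -/
def mergeK (I B : Finset (Fin m)) (g : {i // i ∈ I ∩ B} → Fin q)
    (a : {i // i ∈ Bᶜ} → Fin q) : {i // i ∈ I} → Fin q :=
  fun i => if hh : ↑i ∈ B then g ⟨↑i, Finset.mem_inter.mpr ⟨i.2, hh⟩⟩
           else a ⟨↑i, Finset.mem_compl.mpr hh⟩

/-- Merging: values on `B` from `b`, values on `I ∩ Bᶜ` from `g`. -/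
def mergeL (I B : Finset (Fin m)) (b : {i // i ∈ B} → Fin q)
    (g : {i // i ∈ I ∩ Bᶜ} → Fin q) : {i // i ∈ I} → Fin q :=
  fun i => if hh : ↑i ∈ B then b ⟨↑i, hh⟩
           else g ⟨↑i, Finset.mem_inter.mpr ⟨i.2, Finset.mem_compl.mpr hh⟩⟩

lemma restr_glue_eq_mergeK (I B : Finset (Fin m)) (hIB : Iᶜ ⊆ B)
    (b : {i // i ∈ B} → Fin q) (a : {i // i ∈ Bᶜ} → Fin q) :
    restr I (glue B b a) = mergeK I B ((splitEquiv I B hIB b).1) a := by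
  funext i
  show glue B b a ↑i = _
  unfold glue mergeK splitEquiv
  split <;> rfl

lemma restr_glue_eq_mergeL (I B : Finset (Fin m)) (hIB : Iᶜ ⊆ Bᶜ)
    (b : {i // i ∈ B} → Fin q) (a : {i // i ∈ Bᶜ} → Fin q) :
    restr I (glue B b a) = mergeL I B b ((splitEquiv I Bᶜ hIB a).1) := by
  funext i
  show glue B b a ↑i = _
  unfold glue mergeL splitEquiv
  split <;> rfl

lemma mergeK_eq_iff (I B : Finset (Fin m)) (hBI : Bᶜ ⊆ I)
    (g : {i // i ∈ I ∩ B} → Fin q) (a a' : {i // i ∈ Bᶜ} → Fin q) :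
    mergeK I B g a = mergeK I B g a' ↔ a = a' := by
  constructor
  · intro h
    funext j
    have hj : ↑j ∉ B := Finset.mem_compl.mp j.2
    have := congrFun h ⟨↑j, hBI j.2⟩
    unfold mergeK at this
    rw [dif_neg hj, dif_neg hj] at this
    simpa using this
  · intro h; rw [h]

lemma mergeL_eq_iff (I B : Finset (Fin m)) (hBI : B ⊆ I)
    (b b' : {i // i ∈ B} → Fin q) (g : {i // i ∈ I ∩ Bᶜ} → Fin q) :
    mergeL I B b g = mergeL I B b' g ↔ b = b' := by
  constructor
  · intro h
    funext j
    have hj : ↑j ∈ B := j.2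
    have := congrFun h ⟨↑j, hBI j.2⟩
    unfold mergeL at this
    rw [dif_pos hj, dif_pos hj] at this
    simpa using this
  · intro h; rw [h]

end Aux

/-- The normalized reduced density matrix of the state of a perfect (balanced-unitary)
tensor `T` on `m = 2s` indices, obtained by tracing out a set `B` of `c` indices:
it is Hermitian, positive semidefinite, of unit trace; it is maximally mixed when at least
half of the indices are traced out (`m - c ≤ s`); and when fewer than half the indices are
traced out (`c < s`) it satisfies `ρ·ρ = q^(-c)·ρ` and has rank `q^c`, so it has exactly
`q^c` nonzero eigenvalues, each equal to `q^(-c)`. -/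
theorem reduced_density_matrix_of_perfect_tensor
    (q s : ℕ) (hq : 1 ≤ q) (hs : 1 ≤ s) (m : ℕ) (hm : m = 2 * s)
    (T : (Fin m → Fin q) → ℂ)
    (hperf : ∀ I : Finset (Fin m), I.card = s →
      ∀ a a' : {i // i ∈ I} → Fin q,
        ∑ b : {i // i ∈ Iᶜ} → Fin q,
          T (glue I a b) * (starRingEnd ℂ) (T (glue I a' b)) =
            if a = a' then 1 else 0)
    (B : Finset (Fin m)) (c : ℕ) (hc : B.card = c)
    (ρ : Matrix ({i // i ∈ Bᶜ} → Fin q) ({i // i ∈ Bᶜ} → Fin q) ℂ)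
    (hρ : ∀ a a' : {i // i ∈ Bᶜ} → Fin q,
      ρ a a' = ((q : ℂ) ^ s)⁻¹ *
        ∑ b : {i // i ∈ B} → Fin q,
          T (glue B b a) * (starRingEnd ℂ) (T (glue B b a'))) :
    (ρ.IsHermitian ∧ ρ.PosSemidef ∧ ρ.trace = 1) ∧
    (m - c ≤ s →
      ρ = ((q : ℂ) ^ (m - c))⁻¹ •
        (1 : Matrix ({i // i ∈ Bᶜ} → Fin q) ({i // i ∈ Bᶜ} → Fin q) ℂ)) ∧
    (c < s → ρ * ρ = ((q : ℂ) ^ c)⁻¹ • ρ ∧ ρ.rank = q ^ c) := by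
  have hq0 : (q : ℂ) ≠ 0 := Nat.cast_ne_zero.mpr (by omega)
  have hqR0 : (0 : ℝ) < (q : ℝ) ^ s := by positivity
  have hcm : c ≤ m := by rw [← hc]; simpa using Finset.card_le_card (Finset.subset_univ B)
  have hBc_card : Bᶜ.card = m - c := by
    rw [Finset.card_compl, hc]; simp
  -- Positive semidefiniteness via ρ = Matrix.conjTranspose N * N
  have hPSD : ρ.PosSemidef := by
    set r : ℝ := Real.sqrt (((q : ℝ) ^ s)⁻¹) with hr
    have hrr : (r : ℂ) * (r : ℂ) = ((q : ℂ) ^ s)⁻¹ := by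
      have h0 : r * r = ((q : ℝ) ^ s)⁻¹ := Real.mul_self_sqrt (by positivity)
      calc (r : ℂ) * (r : ℂ) = ((r * r : ℝ) : ℂ) := by push_cast; ring
        _ = ((((q : ℝ) ^ s)⁻¹ : ℝ) : ℂ) := by rw [h0]
        _ = ((q : ℂ) ^ s)⁻¹ := by push_cast; ring
    set N : Matrix ({i // i ∈ B} → Fin q) ({i // i ∈ Bᶜ} → Fin q) ℂ :=
      Matrix.of fun b a => (r : ℂ) * (starRingEnd ℂ) (T (glue B b a)) with hN
    have hρeq : ρ = Matrix.conjTranspose N * N := by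
      ext a a'
      rw [hρ, Matrix.mul_apply, Finset.mul_sum]
      refine Finset.sum_congr rfl fun b _ => ?_
      simp only [hN, Matrix.conjTranspose_apply, Matrix.of_apply, star_mul',
        star_star, RCLike.star_def, Complex.conj_ofReal, Complex.conj_conj]
      rw [← hrr]
      ring
    rw [hρeq]
    exact Matrix.posSemidef_conjTranspose_mul_self _
  have hHerm : ρ.IsHermitian := hPSD.1
  -- Trace = 1
  have hTr : ρ.trace = 1 := by
    obtain ⟨I0, -, hI0card⟩ := Finset.exists_subset_card_eq
      (s := (Finset.univ : Finset (Fin m))) (n := s) (by simp; omega)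
    have total : ∑ x : Fin m → Fin q, T x * (starRingEnd ℂ) (T x) = (q : ℂ) ^ s := by
      rw [← sum_glue I0]
      have : ∀ a : {i // i ∈ I0} → Fin q,
          ∑ b : {i // i ∈ I0ᶜ} → Fin q,
            T (glue I0 a b) * (starRingEnd ℂ) (T (glue I0 a b)) = 1 := by
        intro a
        rw [hperf I0 hI0card a a, if_pos rfl]
      rw [Finset.sum_congr rfl fun a _ => this a, Finset.sum_const, Finset.card_univ,
        Fintype.card_fun, Fintype.card_coe, Fintype.card_fin, hI0card, nsmul_eq_mul,
        mul_one, Nat.cast_pow]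
    have hswap : ∑ a : {i // i ∈ Bᶜ} → Fin q, ∑ b : {i // i ∈ B} → Fin q,
        T (glue B b a) * (starRingEnd ℂ) (T (glue B b a)) = (q : ℂ) ^ s := by
      rw [Finset.sum_comm, sum_glue B (fun x => T x * (starRingEnd ℂ) (T x)), total]
    rw [Matrix.trace]
    simp only [Matrix.diag_apply, hρ]
    rw [← Finset.mul_sum, hswap, inv_mul_cancel₀ (by positivity)]
  refine ⟨⟨hHerm, hPSD, hTr⟩, ?_, ?_⟩
  · -- Part (ii): maximally mixed
    intro hmc
    obtain ⟨I, hsub, -, hIcard⟩ := Finset.exists_subsuperset_card_eq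
      (Finset.subset_univ Bᶜ) (by omega : Bᶜ.card ≤ s) (by simp; omega)
    have hIB : Iᶜ ⊆ B := by
      intro x hx
      by_contra hxB
      exact (Finset.mem_compl.mp hx) (hsub (Finset.mem_compl.mpr hxB))
    have hBI : Bᶜ ⊆ I := hsub
    have hcardIB : (I ∩ B).card = s - (m - c) := by
      have h1 : I \ B = Bᶜ := by
        ext x
        simp only [Finset.mem_sdiff, Finset.mem_compl]
        exact ⟨fun h => h.2, fun h => ⟨hBI (Finset.mem_compl.mpr h), h⟩⟩
      have h2 := Finset.card_inter_add_card_sdiff I B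
      rw [h1, hBc_card, hIcard] at h2
      omega
    ext a a'
    rw [hρ, Matrix.smul_apply, Matrix.one_apply, smul_eq_mul]
    set e := splitEquiv I B hIB with he
    have hsum : ∑ b : {i // i ∈ B} → Fin q,
        T (glue B b a) * (starRingEnd ℂ) (T (glue B b a'))
        = if a = a' then (q : ℂ) ^ (s - (m - c)) else 0 := by
      calc ∑ b : {i // i ∈ B} → Fin q, T (glue B b a) * (starRingEnd ℂ) (T (glue B b a'))
          = ∑ b : {i // i ∈ B} → Fin q,
              T (glue I (mergeK I B ((e b).1) a) ((e b).2)) *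
                (starRingEnd ℂ) (T (glue I (mergeK I B ((e b).1) a') ((e b).2))) := by
            refine Finset.sum_congr rfl fun b _ => ?_
            rw [glue_eq_split I B hIB b a, glue_eq_split I B hIB b a',
              restr_glue_eq_mergeK I B hIB b a, restr_glue_eq_mergeK I B hIB b a']
            rfl
        _ = ∑ p : ({i // i ∈ I ∩ B} → Fin q) × ({i // i ∈ Iᶜ} → Fin q),
              T (glue I (mergeK I B p.1 a) p.2) *
                (starRingEnd ℂ) (T (glue I (mergeK I B p.1 a') p.2)) :=
            Equiv.sum_comp e (fun p => T (glue I (mergeK I B p.1 a) p.2) *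
                (starRingEnd ℂ) (T (glue I (mergeK I B p.1 a') p.2)))
        _ = ∑ g : {i // i ∈ I ∩ B} → Fin q, ∑ f : {i // i ∈ Iᶜ} → Fin q,
              T (glue I (mergeK I B g a) f) *
                (starRingEnd ℂ) (T (glue I (mergeK I B g a') f)) :=
            Fintype.sum_prod_type _
        _ = ∑ g : {i // i ∈ I ∩ B} → Fin q,
              (if mergeK I B g a = mergeK I B g a' then (1 : ℂ) else 0) :=
            Finset.sum_congr rfl fun g _ => hperf I hIcard (mergeK I B g a) (mergeK I B g a')
        _ = ∑ _g : {i // i ∈ I ∩ B} → Fin q, (if a = a' then (1 : ℂ) else 0) :=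
            Finset.sum_congr rfl fun g _ =>
              if_congr (mergeK_eq_iff I B hBI g a a') rfl rfl
        _ = if a = a' then (q : ℂ) ^ (s - (m - c)) else 0 := by
            rw [Finset.sum_const, Finset.card_univ, Fintype.card_fun, Fintype.card_coe,
              Fintype.card_fin, hcardIB, nsmul_eq_mul, Nat.cast_pow]
            split <;> ring
    rw [hsum]
    by_cases hA : a = a'
    · rw [if_pos hA, if_pos hA, mul_one]
      have hpow : (q : ℂ) ^ (s - (m - c)) * (q : ℂ) ^ (m - c) = (q : ℂ) ^ s := by
        rw [← pow_add]
        congr 1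
        omega
      field_simp
      linear_combination hpow
    · rw [if_neg hA, if_neg hA, mul_zero, mul_zero]
  · -- Part (iii)
    intro hcs
    obtain ⟨I, hsub, -, hIcard⟩ := Finset.exists_subsuperset_card_eq
      (Finset.subset_univ B) (by omega : B.card ≤ s) (by simp; omega)
    have hIBc : Iᶜ ⊆ Bᶜ := by
      intro x hx
      exact Finset.mem_compl.mpr fun hxB => (Finset.mem_compl.mp hx) (hsub hxB)
    have hcardIBc : (I ∩ Bᶜ).card = s - c := by
      have h1 : I ∩ Bᶜ = I \ B := by
        ext x
        simp [Finset.mem_inter, Finset.mem_sdiff, Finset.mem_compl]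
      have h2 := Finset.card_sdiff_of_subset hsub
      rw [hIcard, hc] at h2
      rw [h1, h2]
    set e := splitEquiv I Bᶜ hIBc with he
    have inner : ∀ b b' : {i // i ∈ B} → Fin q,
        ∑ x : {i // i ∈ Bᶜ} → Fin q,
          (starRingEnd ℂ) (T (glue B b x)) * T (glue B b' x)
          = if b = b' then (q : ℂ) ^ (s - c) else 0 := by
      intro b b'
      calc ∑ x : {i // i ∈ Bᶜ} → Fin q,
            (starRingEnd ℂ) (T (glue B b x)) * T (glue B b' x)
          = ∑ x : {i // i ∈ Bᶜ} → Fin q,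
              (starRingEnd ℂ) (T (glue I (mergeL I B b ((e x).1)) ((e x).2))) *
                T (glue I (mergeL I B b' ((e x).1)) ((e x).2)) := by
            refine Finset.sum_congr rfl fun x _ => ?_
            rw [glue_eq_split' I B hIBc b x, glue_eq_split' I B hIBc b' x,
              restr_glue_eq_mergeL I B hIBc b x, restr_glue_eq_mergeL I B hIBc b' x]
            rfl
        _ = ∑ p : ({i // i ∈ I ∩ Bᶜ} → Fin q) × ({i // i ∈ Iᶜ} → Fin q),
              (starRingEnd ℂ) (T (glue I (mergeL I B b p.1) p.2)) *
                T (glue I (mergeL I B b' p.1) p.2) :=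
            Equiv.sum_comp e (fun p => (starRingEnd ℂ) (T (glue I (mergeL I B b p.1) p.2)) *
                T (glue I (mergeL I B b' p.1) p.2))
        _ = ∑ g : {i // i ∈ I ∩ Bᶜ} → Fin q, ∑ f : {i // i ∈ Iᶜ} → Fin q,
              (starRingEnd ℂ) (T (glue I (mergeL I B b g) f)) *
                T (glue I (mergeL I B b' g) f) :=
            Fintype.sum_prod_type _
        _ = ∑ g : {i // i ∈ I ∩ Bᶜ} → Fin q,
              (if mergeL I B b' g = mergeL I B b g then (1 : ℂ) else 0) := by
            refine Finset.sum_congr rfl fun g _ => ?_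
            rw [← hperf I hIcard (mergeL I B b' g) (mergeL I B b g)]
            exact Finset.sum_congr rfl fun f _ => mul_comm _ _
        _ = ∑ _g : {i // i ∈ I ∩ Bᶜ} → Fin q, (if b = b' then (1 : ℂ) else 0) :=
            Finset.sum_congr rfl fun g _ =>
              if_congr ((mergeL_eq_iff I B hsub b' b g).trans eq_comm) rfl rfl
        _ = if b = b' then (q : ℂ) ^ (s - c) else 0 := by
            rw [Finset.sum_const, Finset.card_univ, Fintype.card_fun, Fintype.card_coe,
              Fintype.card_fin, hcardIBc, nsmul_eq_mul, Nat.cast_pow]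
            split <;> ring
    have hidem : ρ * ρ = ((q : ℂ) ^ c)⁻¹ • ρ := by
      ext a a''
      rw [Matrix.mul_apply, Matrix.smul_apply, smul_eq_mul]
      have step1 : ∀ x : {i // i ∈ Bᶜ} → Fin q,
          ρ a x * ρ x a'' = ((q : ℂ) ^ s)⁻¹ * ((q : ℂ) ^ s)⁻¹ *
            ∑ b : {i // i ∈ B} → Fin q, ∑ b' : {i // i ∈ B} → Fin q,
              (T (glue B b a) * (starRingEnd ℂ) (T (glue B b' a''))) *
                ((starRingEnd ℂ) (T (glue B b x)) * T (glue B b' x)) := by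
        intro x
        rw [hρ a x, hρ x a'']
        rw [mul_mul_mul_comm, Finset.sum_mul_sum]
        congr 1
        refine Finset.sum_congr rfl fun b _ => Finset.sum_congr rfl fun b' _ => ?_
        ring
      calc ∑ x : {i // i ∈ Bᶜ} → Fin q, ρ a x * ρ x a''
          = ((q : ℂ) ^ s)⁻¹ * ((q : ℂ) ^ s)⁻¹ *
            ∑ x : {i // i ∈ Bᶜ} → Fin q,
              ∑ b : {i // i ∈ B} → Fin q, ∑ b' : {i // i ∈ B} → Fin q,
                (T (glue B b a) * (starRingEnd ℂ) (T (glue B b' a''))) *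
                  ((starRingEnd ℂ) (T (glue B b x)) * T (glue B b' x)) := by
            rw [Finset.mul_sum]
            exact Finset.sum_congr rfl fun x _ => step1 x
        _ = ((q : ℂ) ^ s)⁻¹ * ((q : ℂ) ^ s)⁻¹ *
            ∑ b : {i // i ∈ B} → Fin q, ∑ b' : {i // i ∈ B} → Fin q,
              (T (glue B b a) * (starRingEnd ℂ) (T (glue B b' a''))) *
                ∑ x : {i // i ∈ Bᶜ} → Fin q,
                  ((starRingEnd ℂ) (T (glue B b x)) * T (glue B b' x)) := by
            congr 1
            rw [Finset.sum_comm]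
            refine Finset.sum_congr rfl fun b _ => ?_
            rw [Finset.sum_comm]
            refine Finset.sum_congr rfl fun b' _ => ?_
            rw [Finset.mul_sum]
        _ = ((q : ℂ) ^ s)⁻¹ * ((q : ℂ) ^ s)⁻¹ * ((q : ℂ) ^ (s - c) *
            ∑ b : {i // i ∈ B} → Fin q,
              T (glue B b a) * (starRingEnd ℂ) (T (glue B b a''))) := by
            congr 1
            rw [Finset.mul_sum]
            refine Finset.sum_congr rfl fun b _ => ?_
            rw [Finset.sum_congr rfl fun b' _ => by rw [inner b b']]
            rw [Finset.sum_eq_single b]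
            · rw [if_pos rfl]; ring
            · intro b' _ hb'
              rw [if_neg (Ne.symm hb'), mul_zero]
            · intro hb; exact absurd (Finset.mem_univ b) hb
        _ = ((q : ℂ) ^ c)⁻¹ * ρ a a'' := by
            rw [hρ a a'']
            have harith : ((q : ℂ) ^ s)⁻¹ * ((q : ℂ) ^ s)⁻¹ * (q : ℂ) ^ (s - c)
                = ((q : ℂ) ^ c)⁻¹ * ((q : ℂ) ^ s)⁻¹ := by
              have hpow : (q : ℂ) ^ (s - c) * (q : ℂ) ^ c = (q : ℂ) ^ s := by
                rw [← pow_add]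
                congr 1
                omega
              field_simp
              linear_combination hpow
            rw [← mul_assoc, harith, mul_assoc]
    refine ⟨hidem, ?_⟩
    -- rank computation via eigenvalues
    have heig : ∀ i, hHerm.eigenvalues i = 0 ∨
        hHerm.eigenvalues i = (((q : ℝ) ^ c)⁻¹ : ℝ) := by
      intro i
      set v : ({i // i ∈ Bᶜ} → Fin q) → ℂ := ⇑(hHerm.eigenvectorBasis i) with hv
      set μ : ℝ := hHerm.eigenvalues i with hμ
      have hvec : ρ.mulVec v = (μ : ℂ) • v := by
        rw [hHerm.mulVec_eigenvectorBasis i]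
        funext j
        show μ • (hHerm.eigenvectorBasis i) j = (μ : ℂ) * v j
        rw [Complex.real_smul]
      have hv0 : v ≠ 0 := by
        intro h
        apply hHerm.eigenvectorBasis.orthonormal.ne_zero i
        ext j
        exact congrFun h j
      have h1 : (ρ * ρ).mulVec v = ((μ : ℂ) * (μ : ℂ)) • v := by
        rw [← Matrix.mulVec_mulVec, hvec, Matrix.mulVec_smul, hvec, smul_smul]
      have h2 : (ρ * ρ).mulVec v = (((q : ℂ) ^ c)⁻¹ * (μ : ℂ)) • v := by
        rw [hidem, Matrix.smul_mulVec, hvec, smul_smul]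
      have h3 : ((μ : ℂ) * (μ : ℂ) - ((q : ℂ) ^ c)⁻¹ * (μ : ℂ)) • v = 0 := by
        rw [sub_smul, ← h1, ← h2, sub_self]
      rcases smul_eq_zero.mp h3 with h4 | h4
      · have h5 : (μ : ℂ) * ((μ : ℂ) - ((q : ℂ) ^ c)⁻¹) = 0 := by
          rw [← h4]; ring
        rcases mul_eq_zero.mp h5 with h6 | h6
        · left; exact_mod_cast h6
        · right
          have h7 : (μ : ℂ) = ((q : ℂ) ^ c)⁻¹ := sub_eq_zero.mp h6
          have h8 : (μ : ℂ) = (((((q : ℝ) ^ c)⁻¹ : ℝ)) : ℂ) := by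
            rw [h7]; push_cast; ring
          exact_mod_cast h8
      · exact absurd h4 hv0
    -- trace = sum of eigenvalues
    have htr_eig : ρ.trace = ∑ i, (hHerm.eigenvalues i : ℂ) := by
      have hU : star (hHerm.eigenvectorUnitary : Matrix ({i // i ∈ Bᶜ} → Fin q)
            ({i // i ∈ Bᶜ} → Fin q) ℂ) *
          (hHerm.eigenvectorUnitary : Matrix ({i // i ∈ Bᶜ} → Fin q)
            ({i // i ∈ Bᶜ} → Fin q) ℂ) = 1 :=
        Unitary.star_mul_self_of_mem (hHerm.eigenvectorUnitary).2
      calc ρ.trace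
          = Matrix.trace ((hHerm.eigenvectorUnitary : Matrix ({i // i ∈ Bᶜ} → Fin q)
              ({i // i ∈ Bᶜ} → Fin q) ℂ) *
              Matrix.diagonal (RCLike.ofReal ∘ hHerm.eigenvalues) *
              star (hHerm.eigenvectorUnitary : Matrix ({i // i ∈ Bᶜ} → Fin q)
              ({i // i ∈ Bᶜ} → Fin q) ℂ)) := by
            conv_lhs => rw [hHerm.spectral_theorem, Unitary.conjStarAlgAut_apply]
        _ = Matrix.trace (star (hHerm.eigenvectorUnitary : Matrix ({i // i ∈ Bᶜ} → Fin q)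
              ({i // i ∈ Bᶜ} → Fin q) ℂ) *
              ((hHerm.eigenvectorUnitary : Matrix ({i // i ∈ Bᶜ} → Fin q)
              ({i // i ∈ Bᶜ} → Fin q) ℂ) *
              Matrix.diagonal (RCLike.ofReal ∘ hHerm.eigenvalues))) := by
            rw [Matrix.trace_mul_comm]
        _ = Matrix.trace (Matrix.diagonal (RCLike.ofReal ∘ hHerm.eigenvalues)) := by
            rw [← mul_assoc, hU, Matrix.one_mul]
        _ = ∑ i, (hHerm.eigenvalues i : ℂ) := by
            rw [Matrix.trace_diagonal]
            rfl
    have hsum_eig : ∑ i, hHerm.eigenvalues i = 1 := by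
      have : ((∑ i, hHerm.eigenvalues i : ℝ) : ℂ) = 1 := by
        push_cast
        rw [← htr_eig, hTr]
      exact_mod_cast this
    -- count nonzero eigenvalues
    classical
    have hcount : (Finset.univ.filter fun i => hHerm.eigenvalues i ≠ 0).card = q ^ c := by
      have hqc0 : (0 : ℝ) < (q : ℝ) ^ c := by positivity
      have hsplit : ∑ i, hHerm.eigenvalues i
          = ∑ i ∈ Finset.univ.filter (fun i => hHerm.eigenvalues i ≠ 0),
              hHerm.eigenvalues i := by
        rw [Finset.sum_filter_ne_zero]
      have hval : ∑ i ∈ Finset.univ.filter (fun i => hHerm.eigenvalues i ≠ 0),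
          hHerm.eigenvalues i
          = ((Finset.univ.filter fun i => hHerm.eigenvalues i ≠ 0).card : ℝ) *
            ((q : ℝ) ^ c)⁻¹ := by
        rw [Finset.sum_congr rfl (fun i hi => ?_), Finset.sum_const, nsmul_eq_mul]
        rcases heig i with h | h
        · exact absurd h (Finset.mem_filter.mp hi).2
        · exact h
      have : ((Finset.univ.filter fun i => hHerm.eigenvalues i ≠ 0).card : ℝ) *
          ((q : ℝ) ^ c)⁻¹ = 1 := by
        rw [← hval, ← hsplit, hsum_eig]
      have h9 : ((Finset.univ.filter fun i => hHerm.eigenvalues i ≠ 0).card : ℝ)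
          = (q : ℝ) ^ c := by
        field_simp at this
        linarith
      exact_mod_cast h9
    rw [hHerm.rank_eq_card_non_zero_eigs]
    rw [Fintype.card_subtype]
    exact hcount
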